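/- Let p, q be nonnegative integers with q ≥ 1 and fix a nonnegative integer i. Then the sequence j ↦ A_{p,q}(i,j)/A_{p,q-1}(i,j) (a sequence of real numbers) is nonincreasing in j and converges to (p+q+i+1)/(p+q+1) as j → ∞. -/
import Mathlib

open Filter Finset Topology

/-- The generalized Eulerian number `eulerA p q i j` counts the paths in the Euler graph
from `(p, q)` to `(p + i, q + j)`.  It is defined by the initial conditions
`eulerA p q i 0 = (q+1)^i`, `eulerA p q 0 j = (p+1)^j` and the recurrence
`eulerA p q i j = (j+q+1) * eulerA p q (i-1) j + (i+p+1) * eulerA p q i (j-1)`. -/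
def eulerA (p q : ℕ) : ℕ → ℕ → ℕ
  | i, 0 => (q + 1) ^ i
  | 0, j + 1 => (p + 1) ^ (j + 1)
  | i + 1, j + 1 =>
      (j + 1 + q + 1) * eulerA p q i (j + 1) + (i + 1 + p + 1) * eulerA p q (i + 1) j

lemma eulerA_zero_right (p q i : ℕ) : eulerA p q i 0 = (q+1)^i := by
  cases i <;> simp [eulerA]

lemma eulerA_zero_left (p q j : ℕ) : eulerA p q 0 j = (p+1)^j := by
  cases j <;> simp [eulerA]

lemma eulerA_succ (p q i j : ℕ) :
    eulerA p q (i+1) (j+1) = (j+q+2) * eulerA p q i (j+1) + (i+p+2) * eulerA p q (i+1) j := by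
  rw [eulerA]; ring_nf

lemma eulerA_pos (p q i j : ℕ) : 0 < eulerA p q i j := by
  induction i generalizing j with
  | zero => rw [eulerA_zero_left]; positivity
  | succ i ih =>
    induction j with
    | zero => rw [eulerA_zero_right]; positivity
    | succ j ihj =>
      rw [eulerA_succ]
      have := ih (j+1)
      positivity

lemma eulerA_succ_ge (p q i j : ℕ) : (i+p+1) * eulerA p q i j ≤ eulerA p q i (j+1) := by
  cases i with
  | zero =>
    rw [eulerA_zero_left, eulerA_zero_left, pow_succ]
    apply le_of_eq; ring
  | succ i =>
    rw [eulerA_succ]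
    have : (i+1+p+1) * eulerA p q (i+1) j = (i+p+2) * eulerA p q (i+1) j := by ring
    rw [this]
    exact Nat.le_add_left _ _

section AntitonePart

variable (p Q : ℕ)

lemma recA (i j : ℕ) : eulerA p (Q+1) (i+1) (j+1)
    = (j+Q+3) * eulerA p (Q+1) i (j+1) + (i+p+2) * eulerA p (Q+1) (i+1) j := by
  rw [eulerA_succ]; ring_nf

lemma recB (i j : ℕ) : eulerA p Q (i+1) (j+1)
    = (j+Q+2) * eulerA p Q i (j+1) + (i+p+2) * eulerA p Q (i+1) j := by
  rw [eulerA_succ]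

def Cst (i j : ℕ) : Prop :=
  (j+Q+3)*(j+Q+1) * eulerA p (Q+1) i (j+1) * eulerA p Q i j
    ≤ (j+Q+2)^2 * eulerA p (Q+1) i j * eulerA p Q i (j+1)

def Kst (i j : ℕ) : Prop :=
  (j+Q+3) * eulerA p (Q+1) i (j+1) * eulerA p Q (i+1) j
    ≤ (j+Q+2) * eulerA p Q i (j+1) * eulerA p (Q+1) (i+1) j

lemma Cst_zero (j : ℕ) : Cst p Q 0 j := by
  unfold Cst
  rw [eulerA_zero_left, eulerA_zero_left, eulerA_zero_left, eulerA_zero_left]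
  have h1 : (j+Q+3)*(j+Q+1) ≤ (j+Q+2)^2 := by nlinarith
  calc (j+Q+3)*(j+Q+1) * (p+1)^(j+1) * (p+1)^j
      = ((j+Q+3)*(j+Q+1)) * ((p+1)^(j+1) * (p+1)^j) := by ring
    _ ≤ ((j+Q+2)^2) * ((p+1)^(j+1) * (p+1)^j) :=
        Nat.mul_le_mul_right _ h1
    _ = (j+Q+2)^2 * (p+1)^j * (p+1)^(j+1) := by ring

lemma Kst_of_Cst (i : ℕ) (hC : ∀ j, Cst p Q i j) : ∀ j, Kst p Q i j := by
  intro j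
  induction j with
  | zero =>
    unfold Kst
    have e1 : eulerA p (Q+1) (i+1) 0 = (Q+2) * eulerA p (Q+1) i 0 := by
      rw [eulerA_zero_right, eulerA_zero_right, pow_succ, mul_comm]
    have e2 : eulerA p Q (i+1) 0 = (Q+1) * eulerA p Q i 0 := by
      rw [eulerA_zero_right, eulerA_zero_right, pow_succ, mul_comm]
    rw [e1, e2]
    have hC0 := hC 0
    unfold Cst at hC0
    calc (0+Q+3) * eulerA p (Q+1) i (0+1) * ((Q+1) * eulerA p Q i 0)
        = (0+Q+3)*(0+Q+1) * eulerA p (Q+1) i (0+1) * eulerA p Q i 0 := by ring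
      _ ≤ (0+Q+2)^2 * eulerA p (Q+1) i 0 * eulerA p Q i (0+1) := hC0
      _ = (0+Q+2) * eulerA p Q i (0+1) * ((Q+2) * eulerA p (Q+1) i 0) := by ring
  | succ j ihj =>
    unfold Kst at ihj ⊢
    have hC1 := hC (j+1)
    unfold Cst at hC1
    have hb : (j+Q+4) * eulerA p (Q+1) i (j+2) * eulerA p Q (i+1) j
        ≤ (j+Q+3) * eulerA p (Q+1) (i+1) j * eulerA p Q i (j+2) := by
      have hA1 := eulerA_pos p (Q+1) i (j+1)
      have hB1 := eulerA_pos p Q i (j+1)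
      have hc : 0 < (j+Q+2) * (j+Q+3) * eulerA p (Q+1) i (j+1) * eulerA p Q i (j+1) := by
        positivity
      apply Nat.le_of_mul_le_mul_left _ hc
      calc (j+Q+2)*(j+Q+3) * eulerA p (Q+1) i (j+1) * eulerA p Q i (j+1) *
            ((j+Q+4) * eulerA p (Q+1) i (j+2) * eulerA p Q (i+1) j)
          = ((j+Q+3) * eulerA p (Q+1) i (j+1) * eulerA p Q (i+1) j) *
            ((j+1+Q+3)*(j+1+Q+1) * eulerA p (Q+1) i (j+1+1) * eulerA p Q i (j+1)) := by
            ring_nf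
        _ ≤ ((j+Q+2) * eulerA p Q i (j+1) * eulerA p (Q+1) (i+1) j) *
            ((j+1+Q+2)^2 * eulerA p (Q+1) i (j+1) * eulerA p Q i (j+1+1)) :=
            Nat.mul_le_mul ihj hC1
        _ = (j+Q+2)*(j+Q+3) * eulerA p (Q+1) i (j+1) * eulerA p Q i (j+1) *
            ((j+Q+3) * eulerA p (Q+1) (i+1) j * eulerA p Q i (j+2)) := by ring_nf
    have ha : (j+Q+4)*(j+Q+2) * eulerA p (Q+1) i (j+2) * eulerA p Q i (j+1)
        ≤ (j+Q+3)*(j+Q+3) * eulerA p (Q+1) i (j+1) * eulerA p Q i (j+2) := by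
      calc (j+Q+4)*(j+Q+2) * eulerA p (Q+1) i (j+2) * eulerA p Q i (j+1)
          = (j+1+Q+3)*(j+1+Q+1) * eulerA p (Q+1) i (j+1+1) * eulerA p Q i (j+1) := by ring_nf
        _ ≤ (j+1+Q+2)^2 * eulerA p (Q+1) i (j+1) * eulerA p Q i (j+1+1) := hC1
        _ = (j+Q+3)*(j+Q+3) * eulerA p (Q+1) i (j+1) * eulerA p Q i (j+2) := by ring_nf
    rw [recA, recB]
    calc (j+1+Q+3) * eulerA p (Q+1) i (j+1+1) *
          ((j+Q+2) * eulerA p Q i (j+1) + (i+p+2) * eulerA p Q (i+1) j)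
        = (j+Q+4)*(j+Q+2) * eulerA p (Q+1) i (j+2) * eulerA p Q i (j+1)
          + (i+p+2) * ((j+Q+4) * eulerA p (Q+1) i (j+2) * eulerA p Q (i+1) j) := by ring_nf
      _ ≤ (j+Q+3)*(j+Q+3) * eulerA p (Q+1) i (j+1) * eulerA p Q i (j+2)
          + (i+p+2) * ((j+Q+3) * eulerA p (Q+1) (i+1) j * eulerA p Q i (j+2)) :=
          Nat.add_le_add ha (Nat.mul_le_mul_left _ hb)
      _ = (j+1+Q+2) * eulerA p Q i (j+1+1) *
          ((j+Q+3) * eulerA p (Q+1) i (j+1) + (i+p+2) * eulerA p (Q+1) (i+1) j) := by ring_nf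

lemma Cst_succ (i : ℕ) (hK : ∀ j, Kst p Q i j) : ∀ j, Cst p Q (i+1) j := by
  intro j
  unfold Cst
  have hKj := hK j
  unfold Kst at hKj
  have hsq : (j+Q+3)*(j+Q+1) ≤ (j+Q+2)^2 := by nlinarith
  rw [recA, recB]
  have t1 : (j+Q+3)*(j+Q+1) * ((j+Q+3) * eulerA p (Q+1) i (j+1)) * eulerA p Q (i+1) j
      ≤ (j+Q+2)^2 * eulerA p (Q+1) (i+1) j * ((j+Q+2) * eulerA p Q i (j+1)) := by
    calc (j+Q+3)*(j+Q+1) * ((j+Q+3) * eulerA p (Q+1) i (j+1)) * eulerA p Q (i+1) j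
        = ((j+Q+3)*(j+Q+1)) * ((j+Q+3) * eulerA p (Q+1) i (j+1) * eulerA p Q (i+1) j) := by ring
      _ ≤ ((j+Q+2)^2) * ((j+Q+2) * eulerA p Q i (j+1) * eulerA p (Q+1) (i+1) j) :=
          Nat.mul_le_mul hsq hKj
      _ = (j+Q+2)^2 * eulerA p (Q+1) (i+1) j * ((j+Q+2) * eulerA p Q i (j+1)) := by ring
  have t2 : (j+Q+3)*(j+Q+1) * ((i+p+2) * eulerA p (Q+1) (i+1) j) * eulerA p Q (i+1) j
      ≤ (j+Q+2)^2 * eulerA p (Q+1) (i+1) j * ((i+p+2) * eulerA p Q (i+1) j) := by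
    calc (j+Q+3)*(j+Q+1) * ((i+p+2) * eulerA p (Q+1) (i+1) j) * eulerA p Q (i+1) j
        = ((j+Q+3)*(j+Q+1)) * ((i+p+2) * eulerA p (Q+1) (i+1) j * eulerA p Q (i+1) j) := by ring
      _ ≤ ((j+Q+2)^2) * ((i+p+2) * eulerA p (Q+1) (i+1) j * eulerA p Q (i+1) j) :=
          Nat.mul_le_mul_right _ hsq
      _ = (j+Q+2)^2 * eulerA p (Q+1) (i+1) j * ((i+p+2) * eulerA p Q (i+1) j) := by ring
  calc (j+Q+3)*(j+Q+1) * ((j+Q+3) * eulerA p (Q+1) i (j+1) + (i+p+2) * eulerA p (Q+1) (i+1) j) * eulerA p Q (i+1) j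
      = (j+Q+3)*(j+Q+1) * ((j+Q+3) * eulerA p (Q+1) i (j+1)) * eulerA p Q (i+1) j
        + (j+Q+3)*(j+Q+1) * ((i+p+2) * eulerA p (Q+1) (i+1) j) * eulerA p Q (i+1) j := by ring
    _ ≤ (j+Q+2)^2 * eulerA p (Q+1) (i+1) j * ((j+Q+2) * eulerA p Q i (j+1))
        + (j+Q+2)^2 * eulerA p (Q+1) (i+1) j * ((i+p+2) * eulerA p Q (i+1) j) :=
        Nat.add_le_add t1 t2
    _ = (j+Q+2)^2 * eulerA p (Q+1) (i+1) j * ((j+Q+2) * eulerA p Q i (j+1) + (i+p+2) * eulerA p Q (i+1) j) := by ring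

lemma Cst_all (i j : ℕ) : Cst p Q i j := by
  induction i generalizing j with
  | zero => exact Cst_zero p Q j
  | succ i ih => exact Cst_succ p Q i (Kst_of_Cst p Q i ih) j

lemma Kst_all (i j : ℕ) : Kst p Q i j := Kst_of_Cst p Q i (Cst_all p Q i) j

/-- the cross inequality giving антitonicity -/
lemma Dst (i j : ℕ) : eulerA p (Q+1) i (j+1) * eulerA p Q i j
    ≤ eulerA p (Q+1) i j * eulerA p Q i (j+1) := by
  cases i with
  | zero =>
    rw [eulerA_zero_left, eulerA_zero_left, eulerA_zero_left, eulerA_zero_left]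
    apply le_of_eq; ring
  | succ i =>
    have hK := Kst_all p Q i j
    unfold Kst at hK
    rw [recA, recB]
    calc ((j+Q+3) * eulerA p (Q+1) i (j+1) + (i+p+2) * eulerA p (Q+1) (i+1) j) * eulerA p Q (i+1) j
        = (j+Q+3) * eulerA p (Q+1) i (j+1) * eulerA p Q (i+1) j
          + (i+p+2) * eulerA p (Q+1) (i+1) j * eulerA p Q (i+1) j := by ring
      _ ≤ (j+Q+2) * eulerA p Q i (j+1) * eulerA p (Q+1) (i+1) j
          + (i+p+2) * eulerA p (Q+1) (i+1) j * eulerA p Q (i+1) j :=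
          Nat.add_le_add_right hK _
      _ = eulerA p (Q+1) (i+1) j * ((j+Q+2) * eulerA p Q i (j+1) + (i+p+2) * eulerA p Q (i+1) j) := by ring

end AntitonePart

lemma eulerA_split : ∀ (i p q j : ℕ),
    eulerA p q (i+1) j
      = ∑ m ∈ range (j+1), (p+1)^m * (q+m+1) * eulerA (p+1) (q+m) i (j-m) := by
  intro i
  induction i with
  | zero =>
    intro p q j
    induction j with
    | zero => simp [eulerA_zero_right, eulerA_zero_left]
    | succ j ihj =>
      rw [eulerA_succ, eulerA_zero_left, ihj,
        sum_range_succ (fun m => (p+1)^m * (q+m+1) * eulerA (p+1) (q+m) 0 (j+1-m)) (j+1)]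
      have step : ∀ m ∈ range (j+1),
          (p+1)^m * (q+m+1) * eulerA (p+1) (q+m) 0 (j+1-m)
          = (p+2) * ((p+1)^m * (q+m+1) * eulerA (p+1) (q+m) 0 (j-m)) := by
        intro m hm
        have hmj : m ≤ j := by simpa [Nat.lt_succ_iff] using hm
        have h1 : j+1-m = (j-m)+1 := by omega
        rw [h1, eulerA_zero_left, eulerA_zero_left, pow_succ]
        ring
      rw [sum_congr rfl step, ← mul_sum]
      have hb : (p+1)^(j+1) * (q+(j+1)+1) * eulerA (p+1) (q+(j+1)) 0 (j+1-(j+1))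
          = (j+q+2) * (p+1)^(j+1) := by
        simp [eulerA_zero_right]
        ring
      rw [hb]
      ring
  | succ i ih =>
    intro p q j
    induction j with
    | zero =>
      simp [eulerA_zero_right]
      ring
    | succ j ihj =>
      rw [eulerA_succ, ihj, ih p q (j+1)]
      -- RHS: split off m = j+1 and use recurrence inside
      rw [sum_range_succ (fun m => (p+1)^m * (q+m+1) * eulerA (p+1) (q+m) (i+1) (j+1-m)) (j+1)]
      have step : ∀ m ∈ range (j+1),
          (p+1)^m * (q+m+1) * eulerA (p+1) (q+m) (i+1) (j+1-m)
          = (j+q+2) * ((p+1)^m * (q+m+1) * eulerA (p+1) (q+m) i (j+1-m))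
            + (i+p+3) * ((p+1)^m * (q+m+1) * eulerA (p+1) (q+m) (i+1) (j-m)) := by
        intro m hm
        have hmj : m ≤ j := by simpa [Nat.lt_succ_iff] using hm
        have h1 : j+1-m = (j-m)+1 := by omega
        rw [h1]
        rw [eulerA_succ (p+1) (q+m) i (j-m)]
        have h2 : (j-m)+(q+m)+2 = j+q+2 := by omega
        have h3 : i+(p+1)+2 = i+p+3 := by omega
        rw [h2, h3, ← h1]
        ring
      rw [sum_congr rfl step, sum_add_distrib, ← mul_sum, ← mul_sum]
      -- boundary for LHS sum over range (j+2)
      rw [sum_range_succ (fun m => (p+1)^m * (q+m+1) * eulerA (p+1) (q+m) i (j+1-m)) (j+1)]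
      have hb : (p+1)^(j+1) * (q+(j+1)+1) * eulerA (p+1) (q+(j+1)) i (j+1-(j+1))
      = (q+j+2)^(i+1) * (p+1)^(j+1) := by
        simp [eulerA_zero_right]
        ring_nf
      have hb2 : (p+1)^(j+1) * (q+(j+1)+1) * eulerA (p+1) (q+(j+1)) (i+1) (j+1-(j+1))
      = (q+j+2)^(i+2) * (p+1)^(j+1) := by
        simp [eulerA_zero_right]
        ring_nf
      rw [hb, hb2]
      ring

noncomputable def cA (p q i : ℕ) : ℝ :=
  ((p:ℝ)+i+1)^i / (Nat.factorial i) * ∏ k ∈ range i, ((p:ℝ)+q+2+k)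

noncomputable def Gf (p q i m : ℕ) : ℝ := ∏ l ∈ range (i+1), ((q:ℝ)+1+m+p+1+l)
noncomputable def Pf (p q i m : ℕ) : ℝ := ∏ l ∈ range i, ((q:ℝ)+1+m+p+2+l)
noncomputable def tf (p i : ℕ) : ℝ := ((p:ℝ)+1)/((p:ℝ)+i+2)

lemma factorial_cast_pos (i : ℕ) : (0:ℝ) < (Nat.factorial i : ℝ) := by
  exact_mod_cast Nat.factorial_pos i

lemma cA_pos (p q i : ℕ) : 0 < cA p q i := by
  unfold cA
  have h2 := factorial_cast_pos i
  have h3 : (0:ℝ) < ∏ k ∈ range i, ((p:ℝ)+q+2+k) := by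
    apply prod_pos; intro k _; positivity
  positivity

lemma Pf_pos (p q i m : ℕ) : 0 < Pf p q i m := by
  unfold Pf; apply prod_pos; intro l _; positivity

lemma Gf_pos (p q i m : ℕ) : 0 < Gf p q i m := by
  unfold Gf; apply prod_pos; intro l _; positivity

lemma tf_pos (p i : ℕ) : 0 < tf p i := by unfold tf; positivity

lemma tf_lt_one (p i : ℕ) : tf p i < 1 := by
  unfold tf
  rw [div_lt_one (by positivity)]
  have : (0:ℝ) ≤ (i:ℝ) := Nat.cast_nonneg i
  linarith

lemma Gf_eq (p q i m : ℕ) : Gf p q i m = Pf p q i m * ((q:ℝ)+1+m+p+1) := by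
  unfold Gf Pf
  rw [prod_range_succ' (fun l => (q:ℝ)+1+m+p+1+l) i]
  have h1 : ∀ l ∈ range i, (q:ℝ)+1+m+p+1+((l:ℕ)+1 : ℕ) = (q:ℝ)+1+m+p+2+l := by
    intro l _; push_cast; ring
  rw [prod_congr rfl h1]
  norm_num

lemma Gf_succ (p q i m : ℕ) : Gf p q i (m+1) = Pf p q i m * ((q:ℝ)+1+m+p+2+i) := by
  unfold Gf Pf
  rw [prod_range_succ (fun l => (q:ℝ)+1+(m+1:ℕ)+p+1+l) i]
  have h1 : ∀ l ∈ range i, (q:ℝ)+1+((m+1:ℕ):ℝ)+p+1+l = (q:ℝ)+1+m+p+2+l := by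
    intro l _; push_cast; ring
  rw [prod_congr rfl h1]
  push_cast; ring

lemma tele (p q i m : ℕ) :
    ((q:ℝ)+1+m) * Pf p q i m
      = (((p:ℝ)+i+2)/((i:ℝ)+1)) * (Gf p q i m - tf p i * Gf p q i (m+1)) := by
  rw [Gf_eq, Gf_succ]
  unfold tf
  have hI2 : ((p:ℝ)+i+2) ≠ 0 := by positivity
  have hi1 : ((i:ℝ)+1) ≠ 0 := by positivity
  field_simp
  ring

lemma cA_shift (p q i m : ℕ) :
    cA (p+1) (q+m) i = ((p:ℝ)+i+2)^i/(Nat.factorial i) * Pf p q i m := by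
  unfold cA Pf
  have h1 : ((p+1:ℕ):ℝ)+i+1 = (p:ℝ)+i+2 := by push_cast; ring
  rw [h1]
  congr 1
  apply prod_congr rfl
  intro k _
  push_cast; ring

lemma cA_succ_eq (p q i : ℕ) :
    cA p q (i+1) = (((p:ℝ)+i+2)^(i+1)/(Nat.factorial (i+1))) * Gf p q i 0 := by
  unfold cA Gf
  have h1 : ((p:ℝ)+(i+1:ℕ)+1) = (p:ℝ)+i+2 := by push_cast; ring
  rw [h1]
  congr 1
  apply prod_congr rfl
  intro k _
  push_cast; ring

/-- the tail `t^J * G J → 0`. -/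
lemma tail_tendsto (p q i : ℕ) :
    Tendsto (fun J => tf p i ^ J * Gf p q i J) atTop (𝓝 0) := by
  set t := tf p i with htdef
  have ht0 := tf_pos p i
  have ht1 := tf_lt_one p i
  have hcR : ((q+p+2+i : ℕ):ℝ) = (q:ℝ)+(p:ℝ)+2+(i:ℝ) := by push_cast; ring
  have hbound : ∀ J, Gf p q i J ≤ ((J+(q+p+2+i):ℕ):ℝ)^(i+1) := by
    intro J
    unfold Gf
    have : ((J+(q+p+2+i):ℕ):ℝ)^(i+1) = ∏ _l ∈ range (i+1), ((J+(q+p+2+i):ℕ):ℝ) := by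
      rw [prod_const, card_range]
    rw [this]
    apply Finset.prod_le_prod
    · intro l _; positivity
    · intro l hl
      have hli : l ≤ i := by simpa [Nat.lt_succ_iff] using hl
      push_cast
      have : (l:ℝ) ≤ (i:ℝ) := by exact_mod_cast hli
      linarith
  have hmain : Tendsto (fun n : ℕ => (n:ℝ)^(i+1) * t^n) atTop (𝓝 0) := by
    have hs := summable_pow_mul_geometric_of_norm_lt_one (R := ℝ) (i+1)
      (r := t) (by rw [Real.norm_eq_abs, abs_of_nonneg ht0.le]; exact ht1)
    exact hs.tendsto_atTop_zero
  have hshift : Tendsto (fun J : ℕ => ((J+(q+p+2+i):ℕ):ℝ)^(i+1) * t^(J+(q+p+2+i))) atTop (𝓝 0) :=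
    hmain.comp (tendsto_add_atTop_nat (q+p+2+i))
  have hshift2 : Tendsto (fun J : ℕ => ((J+(q+p+2+i):ℕ):ℝ)^(i+1) * t^(J+(q+p+2+i)) * (1/t^(q+p+2+i))) atTop (𝓝 0) := by
    simpa using hshift.mul_const (1/t^(q+p+2+i))
  have heq : (fun J : ℕ => ((J+(q+p+2+i):ℕ):ℝ)^(i+1) * t^(J+(q+p+2+i)) * (1/t^(q+p+2+i)))
      = fun J : ℕ => ((J+(q+p+2+i):ℕ):ℝ)^(i+1) * t^J := by
    funext J
    have htc : t^(q+p+2+i) ≠ 0 := by positivity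
    field_simp
    rw [pow_add]
    ring
  rw [heq] at hshift2
  apply squeeze_zero
    (fun J => mul_nonneg (pow_nonneg (tf_pos p i).le J) (Gf_pos p q i J).le)
    (fun J => ?_) hshift2
  calc t^J * Gf p q i J ≤ t^J * ((J+(q+p+2+i):ℕ):ℝ)^(i+1) := by
        apply mul_le_mul_of_nonneg_left (hbound J) (pow_nonneg (tf_pos p i).le J)
    _ = ((J+(q+p+2+i):ℕ):ℝ)^(i+1) * t^J := by ring

lemma eulerA_div_monotone (p q i : ℕ) :
    Monotone (fun j => (eulerA p q i j : ℝ) / ((p:ℝ)+i+1)^j) := by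
  apply monotone_nat_of_le_succ
  intro j
  have key : ((p:ℝ)+i+1) * (eulerA p q i j : ℝ) ≤ (eulerA p q i (j+1) : ℝ) := by
    have h2 : ((i+p+1 : ℕ) : ℝ) * (eulerA p q i j : ℝ) ≤ (eulerA p q i (j+1) : ℝ) := by
      exact_mod_cast eulerA_succ_ge p q i j
    push_cast at h2
    nlinarith [h2]
  have hIj : (0:ℝ) < ((p:ℝ)+i+1)^j := by positivity
  rw [pow_succ, div_le_div_iff₀ hIj (by positivity)]
  nlinarith [mul_le_mul_of_nonneg_right key (le_of_lt hIj)]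

lemma eulerA_tendsto : ∀ (i p q : ℕ),
    Tendsto (fun j => (eulerA p q i j : ℝ)/((p:ℝ)+i+1)^j) atTop (𝓝 (cA p q i)) := by
  intro i
  induction i with
  | zero =>
    intro p q
    have hfun : (fun j => (eulerA p q 0 j : ℝ)/((p:ℝ)+(0:ℕ)+1)^j) = fun _ => (1:ℝ) := by
      funext j
      rw [eulerA_zero_left]
      have hb : ((p:ℝ)+(0:ℕ)+1) = ((p+1 : ℕ) : ℝ) := by push_cast; ring
      rw [hb, ← Nat.cast_pow, div_self (by positivity)]
    rw [hfun]
    have : cA p q 0 = 1 := by simp [cA]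
    rw [this]
    exact tendsto_const_nhds
  | succ i IH =>
    intro p q
    have hI2pos : (0:ℝ) < (p:ℝ)+i+2 := by positivity
    have ht0 := tf_pos p i
    have ht1 := tf_lt_one p i
    -- the inner sequences
    have hbase : ∀ m : ℕ, ((p+1:ℕ):ℝ)+(i:ℝ)+1 = (p:ℝ)+i+2 := by
      intro m; push_cast; ring
    have htend : ∀ m : ℕ, Tendsto (fun r => (eulerA (p+1) (q+m) i r : ℝ)/((p:ℝ)+i+2)^r)
        atTop (𝓝 (cA (p+1) (q+m) i)) := by
      intro m
      have := IH (p+1) (q+m)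
      rw [hbase m] at this
      exact this
    have hmono : ∀ m : ℕ, Monotone (fun r => (eulerA (p+1) (q+m) i r : ℝ)/((p:ℝ)+i+2)^r) := by
      intro m
      have := eulerA_div_monotone (p+1) (q+m) i
      rw [hbase m] at this
      exact this
    have hle : ∀ m r : ℕ, (eulerA (p+1) (q+m) i r : ℝ)/((p:ℝ)+i+2)^r ≤ cA (p+1) (q+m) i :=
      fun m => (hmono m).ge_of_tendsto (htend m)
    -- the sum formula
    have hsum : ∀ j : ℕ, (eulerA p q (i+1) j : ℝ)/((p:ℝ)+i+2)^j
        = ∑ m ∈ range (j+1), tf p i^m * ((q:ℝ)+1+m) *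
            ((eulerA (p+1) (q+m) i (j-m) : ℝ)/((p:ℝ)+i+2)^(j-m)) := by
      intro j
      have hcast : (eulerA p q (i+1) j : ℝ)
          = ∑ m ∈ range (j+1), ((p:ℝ)+1)^m * ((q:ℝ)+m+1) * (eulerA (p+1) (q+m) i (j-m) : ℝ) := by
        rw [eulerA_split i p q j]
        push_cast
        apply sum_congr rfl
        intro m _
        norm_num
      rw [hcast, sum_div]
      apply sum_congr rfl
      intro m hm
      have hmj : m ≤ j := by simpa [Nat.lt_succ_iff] using hm
      have hpow : ((p:ℝ)+i+2)^j = ((p:ℝ)+i+2)^m * ((p:ℝ)+i+2)^(j-m) := by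
        rw [← pow_add]
        congr 1
        omega
      unfold tf
      rw [div_pow, hpow, div_mul_eq_mul_div, div_mul_div_comm]
      ring_nf
    -- partial sums of the limit terms
    have hWsum : ∀ J : ℕ, ∑ m ∈ range (J+1), tf p i^m * ((q:ℝ)+1+m) * cA (p+1) (q+m) i
        = (((p:ℝ)+i+2)^(i+1)/(Nat.factorial (i+1)))
            * (Gf p q i 0 - tf p i^(J+1) * Gf p q i (J+1)) := by
      intro J
      have e1 : ∀ m : ℕ, tf p i^m * ((q:ℝ)+1+m) * cA (p+1) (q+m) i
          = (((p:ℝ)+i+2)^(i+1)/(Nat.factorial (i+1)))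
              * (tf p i^m * Gf p q i m - tf p i^(m+1) * Gf p q i (m+1)) := by
        intro m
        rw [cA_shift]
        have htel := tele p q i m
        have hfac : (Nat.factorial (i+1) : ℝ) = ((i:ℝ)+1) * (Nat.factorial i : ℝ) := by
          rw [Nat.factorial_succ]; push_cast; ring
        have hi1 : ((i:ℝ)+1) ≠ 0 := by positivity
        have hfp : (Nat.factorial i : ℝ) ≠ 0 := (factorial_cast_pos i).ne'
        have hI2 : ((p:ℝ)+i+2) ≠ 0 := hI2pos.ne'
        calc tf p i^m * ((q:ℝ)+1+m) * (((p:ℝ)+i+2)^i/(Nat.factorial i) * Pf p q i m)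
            = ((p:ℝ)+i+2)^i/(Nat.factorial i) * (tf p i^m * (((q:ℝ)+1+m) * Pf p q i m)) := by
              ring
          _ = ((p:ℝ)+i+2)^i/(Nat.factorial i) *
              (tf p i^m * ((((p:ℝ)+i+2)/((i:ℝ)+1)) * (Gf p q i m - tf p i * Gf p q i (m+1)))) := by
              rw [htel]
          _ = (((p:ℝ)+i+2)^(i+1)/(Nat.factorial (i+1)))
              * (tf p i^m * Gf p q i m - tf p i^(m+1) * Gf p q i (m+1)) := by
              rw [hfac]
              field_simp
              ring
      rw [sum_congr rfl (fun m _ => e1 m), ← mul_sum]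
      congr 1
      have := Finset.sum_range_sub' (fun m => tf p i^m * Gf p q i m) (J+1)
      simpa using this
    -- definitions for the rest
    set c : ℝ := cA p q (i+1) with hcdef
    have hceq : c = (((p:ℝ)+i+2)^(i+1)/(Nat.factorial (i+1))) * Gf p q i 0 := cA_succ_eq p q i
    have hκpos : (0:ℝ) < ((p:ℝ)+i+2)^(i+1)/(Nat.factorial (i+1)) := by
      have := factorial_cast_pos (i+1); positivity
    -- upper bound
    have hsle : ∀ j : ℕ, (eulerA p q (i+1) j : ℝ)/((p:ℝ)+i+2)^j ≤ c := by
      intro j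
      rw [hsum j]
      calc ∑ m ∈ range (j+1), tf p i^m * ((q:ℝ)+1+m) *
              ((eulerA (p+1) (q+m) i (j-m) : ℝ)/((p:ℝ)+i+2)^(j-m))
          ≤ ∑ m ∈ range (j+1), tf p i^m * ((q:ℝ)+1+m) * cA (p+1) (q+m) i := by
            apply sum_le_sum
            intro m _
            apply mul_le_mul_of_nonneg_left (hle m (j-m))
            positivity
        _ = (((p:ℝ)+i+2)^(i+1)/(Nat.factorial (i+1)))
              * (Gf p q i 0 - tf p i^(j+1) * Gf p q i (j+1)) := hWsum j
        _ ≤ (((p:ℝ)+i+2)^(i+1)/(Nat.factorial (i+1))) * Gf p q i 0 := by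
            apply mul_le_mul_of_nonneg_left _ hκpos.le
            have h1 : 0 ≤ tf p i^(j+1) * Gf p q i (j+1) := by
              exact mul_nonneg (pow_nonneg ht0.le _) (Gf_pos p q i (j+1)).le
            linarith
        _ = c := hceq.symm
    have hmonoS : Monotone (fun j => (eulerA p q (i+1) j : ℝ)/((p:ℝ)+i+2)^j) := by
      have := eulerA_div_monotone p q (i+1)
      have hb : (p:ℝ)+((i+1:ℕ):ℝ)+1 = (p:ℝ)+i+2 := by push_cast; ring
      rw [hb] at this
      exact this
    have hbdd : BddAbove (Set.range (fun j => (eulerA p q (i+1) j : ℝ)/((p:ℝ)+i+2)^j)) := by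
      refine ⟨c, ?_⟩
      rintro x ⟨j, rfl⟩
      exact hsle j
    have hsup : Tendsto (fun j => (eulerA p q (i+1) j : ℝ)/((p:ℝ)+i+2)^j) atTop
        (𝓝 (⨆ j, (eulerA p q (i+1) j : ℝ)/((p:ℝ)+i+2)^j)) :=
      tendsto_atTop_ciSup hmonoS hbdd
    have hsup_le : (⨆ j, (eulerA p q (i+1) j : ℝ)/((p:ℝ)+i+2)^j) ≤ c := ciSup_le hsle
    -- lower bound on the sup
    have hle_sup : c ≤ (⨆ j, (eulerA p q (i+1) j : ℝ)/((p:ℝ)+i+2)^j) := by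
      set Sup := (⨆ j, (eulerA p q (i+1) j : ℝ)/((p:ℝ)+i+2)^j) with hSup
      -- partial sums tend to c
      have htailJ : Tendsto (fun J => (((p:ℝ)+i+2)^(i+1)/(Nat.factorial (i+1)))
          * (Gf p q i 0 - tf p i^(J+1) * Gf p q i (J+1))) atTop (𝓝 c) := by
        have h0 : Tendsto (fun J => tf p i^(J+1) * Gf p q i (J+1)) atTop (𝓝 0) :=
          (tail_tendsto p q i).comp (tendsto_add_atTop_nat 1)
        have := ((tendsto_const_nhds (x := Gf p q i 0)).sub h0).const_mul
          (((p:ℝ)+i+2)^(i+1)/(Nat.factorial (i+1)))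
        simpa [hceq, Function.comp] using this
      apply le_of_tendsto htailJ
      filter_upwards with J
      rw [← hWsum J]
      -- partial sums ≤ Sup
      have hφ : Tendsto (fun j => ∑ m ∈ range (J+1), tf p i^m * ((q:ℝ)+1+m) *
          ((eulerA (p+1) (q+m) i (j-m) : ℝ)/((p:ℝ)+i+2)^(j-m))) atTop
          (𝓝 (∑ m ∈ range (J+1), tf p i^m * ((q:ℝ)+1+m) * cA (p+1) (q+m) i)) := by
        apply tendsto_finset_sum
        intro m _
        exact (((htend m).comp (tendsto_sub_atTop_nat m)).const_mul _)
      apply le_of_tendsto hφ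
      filter_upwards [eventually_ge_atTop J] with j hjJ
      calc ∑ m ∈ range (J+1), tf p i^m * ((q:ℝ)+1+m) *
            ((eulerA (p+1) (q+m) i (j-m) : ℝ)/((p:ℝ)+i+2)^(j-m))
          ≤ ∑ m ∈ range (j+1), tf p i^m * ((q:ℝ)+1+m) *
            ((eulerA (p+1) (q+m) i (j-m) : ℝ)/((p:ℝ)+i+2)^(j-m)) := by
            apply sum_le_sum_of_subset_of_nonneg
            · exact range_subset_range.mpr (by omega)
            · intro m _ _
              have h1 : (0:ℝ) ≤ (eulerA (p+1) (q+m) i (j-m) : ℝ) := by positivity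
              positivity
        _ = (eulerA p q (i+1) j : ℝ)/((p:ℝ)+i+2)^j := (hsum j).symm
        _ ≤ Sup := by
            rw [hSup]
            exact le_ciSup hbdd j
    have hsupeq : (⨆ j, (eulerA p q (i+1) j : ℝ)/((p:ℝ)+i+2)^j) = c :=
      le_antisymm hsup_le hle_sup
    rw [hsupeq] at hsup
    have hb : (p:ℝ)+((i+1:ℕ):ℝ)+1 = (p:ℝ)+i+2 := by push_cast; ring
    rw [show ((p:ℝ)+((i+1:ℕ):ℝ)+1) = (p:ℝ)+i+2 from hb]
    exact hsup

lemma prod_shift (x : ℝ) : ∀ i : ℕ,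
    x * ∏ k ∈ range i, (x+1+(k:ℝ)) = (x+i) * ∏ k ∈ range i, (x+(k:ℝ)) := by
  intro i
  induction i with
  | zero => simp
  | succ i ih =>
    rw [prod_range_succ, prod_range_succ]
    push_cast
    calc x * ((∏ k ∈ range i, (x+1+(k:ℝ))) * (x+1+i))
        = (x * ∏ k ∈ range i, (x+1+(k:ℝ))) * (x+1+i) := by ring
      _ = ((x+i) * ∏ k ∈ range i, (x+(k:ℝ))) * (x+1+i) := by rw [ih]
      _ = (x+(i+1)) * ((∏ k ∈ range i, (x+(k:ℝ))) * (x+i)) := by ring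

theorem stmt7 (p q i : ℕ) (hq : 1 ≤ q) :
    Antitone (fun j : ℕ => (eulerA p q i j : ℝ) / (eulerA p (q - 1) i j)) ∧
      Filter.Tendsto (fun j : ℕ => (eulerA p q i j : ℝ) / (eulerA p (q - 1) i j))
        Filter.atTop (nhds (((p : ℝ) + q + i + 1) / ((p : ℝ) + q + 1))) := by
  obtain ⟨Q, rfl⟩ : ∃ Q, q = Q + 1 := ⟨q - 1, by omega⟩
  simp only [Nat.add_sub_cancel]
  have hBpos : ∀ j, (0:ℝ) < (eulerA p Q i j : ℝ) := by
    intro j; exact_mod_cast eulerA_pos p Q i j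
  constructor
  · apply antitone_nat_of_succ_le
    intro j
    rw [div_le_div_iff₀ (hBpos (j+1)) (hBpos j)]
    exact_mod_cast Dst p Q i j
  · have htA := eulerA_tendsto i p (Q+1)
    have htB := eulerA_tendsto i p Q
    have hBne : cA p Q i ≠ 0 := (cA_pos p Q i).ne'
    have hdiv := htA.div htB hBne
    have hdiv2 := hdiv.congr (f₂ := fun j => (eulerA p (Q+1) i j : ℝ) / (eulerA p Q i j : ℝ))
      (fun j => by
        show ((eulerA p (Q+1) i j : ℝ)/((p:ℝ)+i+1)^j) / ((eulerA p Q i j : ℝ)/((p:ℝ)+i+1)^j) = _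
        have h1 : ((p:ℝ)+i+1)^j ≠ 0 := by positivity
        have h2 : (eulerA p Q i j : ℝ) ≠ 0 := (hBpos j).ne'
        field_simp)
    clear hdiv
    have hdiv := hdiv2
    have hval : cA p (Q+1) i / cA p Q i = ((p:ℝ) + (Q+1:ℕ) + i + 1) / ((p:ℝ) + (Q+1:ℕ) + 1) := by
      set x : ℝ := (p:ℝ)+Q+2 with hx
      have hxpos : 0 < x := by rw [hx]; positivity
      have eA : ∀ k ∈ range i, ((p:ℝ)+((Q+1:ℕ):ℝ)+2+(k:ℝ)) = x+1+(k:ℝ) := by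
        intro k _; rw [hx]; push_cast; ring
      have eB : ∀ k ∈ range i, ((p:ℝ)+(Q:ℝ)+2+(k:ℝ)) = x+(k:ℝ) := by
        intro k _; rw [hx]
      have hA : cA p (Q+1) i = (((p:ℝ)+i+1)^i / (Nat.factorial i)) * ∏ k ∈ range i, (x+1+(k:ℝ)) := by
        unfold cA
        rw [prod_congr rfl eA]
      have hB : cA p Q i = (((p:ℝ)+i+1)^i / (Nat.factorial i)) * ∏ k ∈ range i, (x+(k:ℝ)) := by
        unfold cA
        rw [prod_congr rfl eB]
      have hF : (0:ℝ) < ((p:ℝ)+i+1)^i / (Nat.factorial i) := by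
        have : (0:ℝ) < (Nat.factorial i : ℝ) := by exact_mod_cast Nat.factorial_pos i
        positivity
      have hPB : (0:ℝ) < ∏ k ∈ range i, (x+(k:ℝ)) := by
        apply prod_pos; intro k _; positivity
      rw [hA, hB, mul_div_mul_left _ _ hF.ne']
      rw [div_eq_div_iff hPB.ne' (by push_cast; positivity)]
      have h1 : ((p:ℝ) + ((Q+1:ℕ):ℝ) + i + 1) = x + i := by rw [hx]; push_cast; ring
      have h2 : ((p:ℝ) + ((Q+1:ℕ):ℝ) + 1) = x := by rw [hx]; push_cast; ring
      rw [h1, h2, mul_comm]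
      exact prod_shift x i
    rw [hval] at hdiv
    exact hdiv
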